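/- Let p be a probability mass function on a countable set W, let δ > 0, and let W_δ = {w ∈ W : p(w) ≥ δ}. Define ξ = ∑_{w ∈ W_δ} p(w) and η = ∑_{w ∈ W_δ} p(w)². If η > 0, then H₂(p) ≤ Ĥ₂(p) ≤ H₂(p) + log(1 + (1-ξ)·δ/η), where H₂(p) = -log ∑_{w ∈ W} p(w)² and Ĥ₂(p) = -log ∑_{w ∈ W_δ} p(w)². -/
import Mathlib


theorem renyi_truncation_bound {W : Type*} [Countable W] (p : W → ℝ)
    (hp : ∀ w, 0 ≤ p w) (hsummable : Summable p) (hsum : ∑' w, p w = 1)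
    (hsq : Summable (fun w => (p w) ^ 2))
    (δ : ℝ) (hδ : 0 < δ)
    (ξ η H2 H2hat : ℝ)
    (hξ : ξ = ∑' w : {w // δ ≤ p w}, p w.val)
    (hη : η = ∑' w : {w // δ ≤ p w}, (p w.val) ^ 2)
    (hηpos : 0 < η)
    (hH2 : H2 = - Real.log (∑' w, (p w) ^ 2))
    (hH2hat : H2hat = - Real.log (∑' w : {w // δ ≤ p w}, (p w.val) ^ 2)) :
    H2 ≤ H2hat ∧ H2hat ≤ H2 + Real.log (1 + (1 - ξ) * δ / η) := by
  set s : Set W := {w | δ ≤ p w} with hs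
  have hsq_s : Summable (fun w : s => (p w.val) ^ 2) := hsq.subtype s
  have hsq_sc : Summable (fun w : ↥sᶜ => (p w.val) ^ 2) := hsq.subtype sᶜ
  have hp_s : Summable (fun w : s => p w.val) := hsummable.subtype s
  have hp_sc : Summable (fun w : ↥sᶜ => p w.val) := hsummable.subtype sᶜ
  have hsplit : (∑' w : s, (p w.val) ^ 2) + (∑' w : ↥sᶜ, (p w.val) ^ 2)
      = ∑' w, (p w) ^ 2 :=
    Summable.tsum_add_tsum_compl (f := fun w => (p w) ^ 2) hsq_s hsq_sc
  have hsplitp : (∑' w : s, p w.val) + (∑' w : ↥sᶜ, p w.val)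
      = ∑' w, p w :=
    Summable.tsum_add_tsum_compl (f := fun w => p w) hp_s hp_sc
  have hηeq : η = ∑' w : s, (p w.val) ^ 2 := hη
  have hξeq : ξ = ∑' w : s, p w.val := hξ
  have hT : (∑' w : ↥sᶜ, (p w.val) ^ 2) ≤ δ * (∑' w : ↥sᶜ, p w.val) := by
    rw [← tsum_mul_left]
    refine Summable.tsum_le_tsum (fun w => ?_) hsq_sc (hp_sc.mul_left δ)
    have hw : p w.val < δ := lt_of_not_ge w.2
    have := hp w.val
    nlinarith
  have hScomp : (∑' w : ↥sᶜ, p w.val) = 1 - ξ := by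
    rw [hξeq]; linarith [hsplitp, hsum]
  have hSle : (∑' w, (p w) ^ 2) ≤ η + (1 - ξ) * δ := by
    rw [hηeq, ← hsplit]
    have := hT
    rw [hScomp] at this
    linarith
  have hηle : η ≤ ∑' w, (p w) ^ 2 := by
    rw [hηeq, ← hsplit]
    have : 0 ≤ ∑' w : ↥sᶜ, (p w.val) ^ 2 :=
      tsum_nonneg (fun w => sq_nonneg _)
    linarith
  have hSpos : 0 < ∑' w, (p w) ^ 2 := lt_of_lt_of_le hηpos hηle
  constructor
  · rw [hH2, hH2hat, ← hη, neg_le_neg_iff]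
    exact Real.log_le_log hηpos hηle
  · have h1ξ : 0 ≤ 1 - ξ := by
      rw [← hScomp]; exact tsum_nonneg (fun w => hp _)
    have hrhs : (1 : ℝ) + (1 - ξ) * δ / η = (η + (1 - ξ) * δ) / η := by
      field_simp
    rw [hH2, hH2hat, ← hη, hrhs,
      Real.log_div (by positivity) (ne_of_gt hηpos)]
    have hlog : Real.log (∑' w, (p w) ^ 2) ≤ Real.log (η + (1 - ξ) * δ) :=
      Real.log_le_log hSpos hSle
    linarith
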